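/- In the setting of the lattice line Z with calculus as above, let g^{++}, g^{--} be nowhere-zero real-valued functions on Z, and define the connection ∇ e^± = (1 - ρ_±) e^± ⊗ e^± with ρ_± = g^{±±}/R_{±1}(g^{±±}). Then the associated bimodule map σ determined by σ(e^± ⊗ df) = ∇(e^± f) - ∇(e^±) f satisfies σ(e^± ⊗ e^∓) = e^∓ ⊗ e^± and σ(e^± ⊗ e^±) = ρ_± e^± ⊗ e^±. -/
import Mathlib


/-- Shift operator on functions on `ℤ`: `(R_k f)(n) = f(n + k)`. -/
def Rz (k : ℤ) (f : ℤ → ℂ) : ℤ → ℂ := fun n => f (n + k)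

/-- Directions: `sgn 0 = +1` (for `e⁺`), `sgn 1 = -1` (for `e⁻`). -/
def sgn : Fin 2 → ℤ := ![1, -1]

/-- Basis 1-forms: `bas a` is `e^a`, a 1-form recorded by its components. -/
def bas (a : Fin 2) : Fin 2 → ℤ → ℂ := fun b => if b = a then 1 else 0

/-- Tensor product over the algebra: component `(a,b)` of `ω ⊗_A η` is `ω_a · R_{sgn a}(η_b)`,
using `e^a f = R_{sgn a}(f) e^a`. -/
def tmulZ (ω η : Fin 2 → ℤ → ℂ) : Fin 2 × Fin 2 → ℤ → ℂ :=
  fun p => ω p.1 * Rz (sgn p.1) (η p.2)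

/-- `d f = (R₊f - f) e⁺ + (R₋f - f) e⁻` in components. -/
def d0Z (f : ℤ → ℂ) : Fin 2 → ℤ → ℂ := fun a => Rz (sgn a) f - f

/-- `ρ_± = g^{±±} / R_{±1}(g^{±±})`. -/
noncomputable def rho (g : Fin 2 → ℤ → ℝ) (a : Fin 2) : ℤ → ℂ :=
  fun n => (g a n : ℂ) / (g a (n + sgn a) : ℂ)

/-- The left connection with `∇ e^± = (1 - ρ_±) e^± ⊗ e^±`, extended by
`∇(f ξ) = df ⊗ ξ + f ∇ξ`, in components. -/
noncomputable def nablaZ (g : Fin 2 → ℤ → ℝ) (ω : Fin 2 → ℤ → ℂ) : Fin 2 × Fin 2 → ℤ → ℂ :=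
  fun p => d0Z (ω p.2) p.1 + (if p.1 = p.2 then ω p.2 * (1 - rho g p.2) else 0)

/-- Right action of a function on 1-forms: `(ω f)_a = ω_a · R_{sgn a}(f)`. -/
def rOneZ (ω : Fin 2 → ℤ → ℂ) (f : ℤ → ℂ) : Fin 2 → ℤ → ℂ :=
  fun a => ω a * Rz (sgn a) f

/-- Right action of a function on elements of `Ω¹ ⊗_A Ω¹`. -/
def rTwoZ (T : Fin 2 × Fin 2 → ℤ → ℂ) (f : ℤ → ℂ) : Fin 2 × Fin 2 → ℤ → ℂ :=
  fun p => T p * Rz (sgn p.1) (Rz (sgn p.2) f)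

/-- Auxiliary: the function `n ↦ n` as a complex-valued function on `ℤ`. -/
private def Nf : ℤ → ℂ := fun n => (n : ℂ)

/-- Auxiliary: the alternating function `n ↦ (-1)^n`. -/
private noncomputable def eps : ℤ → ℂ := fun n => (-1 : ℂ) ^ n

private lemma eps_ne (n : ℤ) : eps n ≠ 0 := zpow_ne_zero _ (by norm_num)
private lemma eps_add (n k : ℤ) : eps (n + k) = eps n * eps k := zpow_add₀ (by norm_num) n k
private lemma eps_one : eps 1 = -1 := by simp [eps]
private lemma eps_neg_one : eps (-1) = -1 := by norm_num [eps]

/-- For nowhere-zero real metric coefficients `g^{±±}`, any bimodule map `σ` on `Ω¹ ⊗_A Ω¹`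
satisfying `σ(e^a ⊗ df) = ∇(e^a f) - ∇(e^a) f` satisfies `σ(e^± ⊗ e^∓) = e^∓ ⊗ e^±` and
`σ(e^± ⊗ e^±) = ρ_± e^± ⊗ e^±`. -/
theorem lattice_sigma (g : Fin 2 → ℤ → ℝ) (hg : ∀ a n, g a n ≠ 0)
    (σ : (Fin 2 × Fin 2 → ℤ → ℂ) → (Fin 2 × Fin 2 → ℤ → ℂ))
    (hadd : ∀ S T, σ (S + T) = σ S + σ T)
    (hleft : ∀ (f : ℤ → ℂ) (T), σ (fun p => f * T p) = fun p => f * σ T p)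
    (hright : ∀ T (f : ℤ → ℂ), σ (rTwoZ T f) = rTwoZ (σ T) f)
    (hdef : ∀ (a : Fin 2) (f : ℤ → ℂ),
      σ (tmulZ (bas a) (d0Z f)) = nablaZ g (rOneZ (bas a) f) - rTwoZ (nablaZ g (bas a)) f) :
    (∀ a b : Fin 2, a ≠ b → σ (tmulZ (bas a) (bas b)) = tmulZ (bas b) (bas a)) ∧
    (∀ a : Fin 2, σ (tmulZ (bas a) (bas a)) = fun p => rho g a * tmulZ (bas a) (bas a) p) := by
  classical
  -- Sum and difference of σ on `e^a ⊗ e⁺` and `e^a ⊗ e⁻`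
  have hdiff : ∀ a : Fin 2,
      σ (tmulZ (bas a) (bas 0) + fun p => (fun _ => (-1 : ℂ)) * tmulZ (bas a) (bas 1) p)
        = fun p n => if p.2 = a then
            (if p.1 = a then rho g a n * (sgn a : ℂ) else -(sgn a : ℂ)) else 0 := by
    intro a
    have harg : (tmulZ (bas a) (bas 0) + fun p => (fun _ => (-1 : ℂ)) * tmulZ (bas a) (bas 1) p)
        = tmulZ (bas a) (d0Z Nf) := by
      funext p n
      obtain ⟨p1, p2⟩ := p
      fin_cases p1 <;> fin_cases p2 <;> fin_cases a <;>
        simp [tmulZ, bas, d0Z, Rz, sgn, Nf, Pi.add_apply] <;> push_cast <;> ring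
    rw [harg, hdef a Nf]
    funext p n
    obtain ⟨p1, p2⟩ := p
    fin_cases p1 <;> fin_cases p2 <;> fin_cases a <;>
      simp [nablaZ, rOneZ, rTwoZ, d0Z, Rz, bas, sgn, Nf] <;> push_cast <;> ring
  have hsum : ∀ a : Fin 2,
      σ (tmulZ (bas a) (bas 0) + tmulZ (bas a) (bas 1))
        = fun p n => if p.2 = a then (if p.1 = a then rho g a n else 1) else 0 := by
    intro a
    set A := tmulZ (bas a) (bas 0) + tmulZ (bas a) (bas 1) with hA
    have harg : (fun p => (fun n => -2 * eps (n + sgn a)) * A p) = tmulZ (bas a) (d0Z eps) := by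
      funext p n
      obtain ⟨p1, p2⟩ := p
      fin_cases p1 <;> fin_cases p2 <;> fin_cases a <;>
        simp [hA, tmulZ, bas, d0Z, Rz, sgn, eps_add, eps_one, eps_neg_one, Pi.add_apply] <;> ring
    have h1 : (fun p => (fun n => -2 * eps (n + sgn a)) * σ A p)
        = nablaZ g (rOneZ (bas a) eps) - rTwoZ (nablaZ g (bas a)) eps := by
      rw [← hleft, harg, hdef]
    have h2 : ∀ p n, σ A p n = (-2 * eps (n + sgn a))⁻¹ *
        (nablaZ g (rOneZ (bas a) eps) - rTwoZ (nablaZ g (bas a)) eps) p n := by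
      intro p n
      have := congrFun (congrFun h1 p) n
      simp only [Pi.mul_apply] at this
      rw [← this, inv_mul_cancel_left₀]
      exact mul_ne_zero (by norm_num) (eps_ne _)
    funext p n
    rw [h2 p n]
    obtain ⟨p1, p2⟩ := p
    have hgn : ∀ (b : Fin 2) (m : ℤ), ((g b m : ℂ)) ≠ 0 := fun b m =>
      Complex.ofReal_ne_zero.mpr (hg b m)
    have he1 := eps_ne n
    fin_cases p1 <;> fin_cases p2 <;> fin_cases a <;>
      simp [nablaZ, rOneZ, rTwoZ, d0Z, Rz, bas, sgn, rho, eps_add, eps_one, eps_neg_one] <;>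
      field_simp <;> ring
  -- Now extract σ on the individual basis tensors.
  have key : ∀ a b : Fin 2, σ (tmulZ (bas a) (bas b))
      = fun p n => (2 : ℂ)⁻¹ * ((if p.2 = a then (if p.1 = a then rho g a n else 1) else 0)
          + (if b = 0 then 1 else -1) *
            (if p.2 = a then (if p.1 = a then rho g a n * (sgn a : ℂ) else -(sgn a : ℂ)) else 0)) := by
    intro a b
    have hAB : σ ((tmulZ (bas a) (bas 0) + tmulZ (bas a) (bas 1)) +
        fun p => (fun _ : ℤ => (if b = 0 then (1:ℂ) else -1)) *
          (tmulZ (bas a) (bas 0) + fun p' => (fun _ : ℤ => (-1:ℂ)) * tmulZ (bas a) (bas 1) p') p)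
        = fun p n => (if p.2 = a then (if p.1 = a then rho g a n else 1) else 0)
          + (if b = 0 then (1:ℂ) else -1) *
            (if p.2 = a then (if p.1 = a then rho g a n * (sgn a : ℂ) else -(sgn a : ℂ)) else 0) := by
      rw [hadd, hleft, hsum a, hdiff a]
      funext p n
      simp [Pi.add_apply]
    have harg : tmulZ (bas a) (bas b)
        = fun p => (fun _ : ℤ => (2 : ℂ)⁻¹) *
            (((tmulZ (bas a) (bas 0) + tmulZ (bas a) (bas 1)) +
              fun p => (fun _ : ℤ => (if b = 0 then (1:ℂ) else -1)) *
                (tmulZ (bas a) (bas 0) + fun p' => (fun _ : ℤ => (-1:ℂ)) * tmulZ (bas a) (bas 1) p') p) p) := by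
      funext p n
      obtain ⟨p1, p2⟩ := p
      fin_cases p1 <;> fin_cases p2 <;> fin_cases a <;> fin_cases b <;>
        simp [tmulZ, bas, Rz, sgn, Pi.add_apply] <;> ring
    rw [harg, hleft, hAB]
    funext p n
    simp
  constructor
  · intro a b hab
    rw [key a b]
    funext p n
    obtain ⟨p1, p2⟩ := p
    fin_cases a <;> fin_cases b <;> first
      | exact absurd rfl hab
      | (fin_cases p1 <;> fin_cases p2 <;> simp [tmulZ, bas, Rz, sgn] <;> ring)
  · intro a
    rw [key a a]
    funext p n
    obtain ⟨p1, p2⟩ := p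
    fin_cases a <;> fin_cases p1 <;> fin_cases p2 <;>
      simp [tmulZ, bas, Rz, sgn, Pi.mul_apply] <;> ring
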